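/- Consider minimizing F(x) = f(x) + h(x) over x ∈ ℝ^n subject to Ax = c, where A ∈ ℝ^{m×n} has full row rank, f is differentiable with ∇f being τ-coordinate Lipschitz with constant L₂ (meaning f(x + d) ≤ f(x) + ⟨∇f(x), d⟩ + (L₂/2)‖d‖₂² for all feasible x and all d with at most τ non-zero entries and Ad = 0), h is convex and coordinate-wise separable, and F satisfies the proximal-PL inequality in the 2-norm with constant μ₂. Fix a block size τ ≥ m + 1. Then block-coordinate descent, where at iteration k the block b^k of τ coordinates and the update d*_{b^k} are chosen jointly to minimize ⟨∇_{b^k} f(x^k), d_{b^k}⟩ + (L₂/2)‖d_{b^k}‖₂² + h_{b^k}(x^k_{b^k} + d_{b^k}) − h_{b^k}(x^k_{b^k}) over blocks b and directions d_b with A·U_b(d_b) = 0 (the GS-q rule), and x^{k+1} = x^k + U_{b^k}(d*_{b^k}), satisfies F(x^k) − F* ≤ (1 − μ₂/(L₂(n − τ + 1)))^k (F(x^0) − F*). -/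

import Mathlib

open Finset

/-- `e` is coordinatewise between `0` and `d`. -/
def CBtw {n : ℕ} (d e : Fin n → ℝ) : Prop :=
  ∀ i, (0 ≤ e i ∧ e i ≤ d i) ∨ (d i ≤ e i ∧ e i ≤ 0)

/-- `e` is sign-conformal to `d`. -/
def CConf {n : ℕ} (d e : Fin n → ℝ) : Prop :=
  ∀ i, 0 ≤ d i * e i ∧ (d i = 0 → e i = 0)

noncomputable def suppF {n : ℕ} (d : Fin n → ℝ) : Finset (Fin n) :=
  univ.filter (fun i => d i ≠ 0)

lemma mem_suppF {n : ℕ} {d : Fin n → ℝ} {i : Fin n} : i ∈ suppF d ↔ d i ≠ 0 := by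
  simp [suppF]

lemma btw_self {n : ℕ} (d : Fin n → ℝ) : CBtw d d := fun i => by
  rcases le_total 0 (d i) with h | h
  · exact Or.inl ⟨h, le_rfl⟩
  · exact Or.inr ⟨le_rfl, h⟩

lemma btw_zero' {n : ℕ} (d : Fin n → ℝ) : CBtw d (fun _ => 0) := fun i => by
  rcases le_total 0 (d i) with h | h
  · exact Or.inl ⟨le_rfl, h⟩
  · exact Or.inr ⟨h, le_rfl⟩

lemma btw_trans {n : ℕ} {d v e : Fin n → ℝ} (h1 : CBtw d v) (h2 : CBtw v e) : CBtw d e := by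
  intro i
  rcases h1 i with ⟨a1, a2⟩ | ⟨a1, a2⟩ <;> rcases h2 i with ⟨b1, b2⟩ | ⟨b1, b2⟩
  · exact Or.inl ⟨b1, le_trans b2 a2⟩
  · exact Or.inl ⟨by linarith, by linarith⟩
  · exact Or.inr ⟨by linarith, by linarith⟩
  · exact Or.inr ⟨le_trans a1 b1, b2⟩

lemma conf_self {n : ℕ} (d : Fin n → ℝ) : CConf d d :=
  fun i => ⟨mul_self_nonneg _, fun h => h⟩

lemma conf_trans {n : ℕ} {d v e : Fin n → ℝ} (h1 : CConf d v) (h2 : CConf v e) : CConf d e := by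
  intro i
  by_cases he : e i = 0
  · simp [he]
  · have hv : v i ≠ 0 := fun h => he ((h2 i).2 h)
    have hd : d i ≠ 0 := fun h => hv ((h1 i).2 h)
    refine ⟨?_, fun h => absurd h hd⟩
    have hvv : 0 < v i * v i := mul_self_pos.mpr hv
    nlinarith [(h1 i).1, (h2 i).1]

/-- In any set of more than `m` coordinates there is a nonzero null vector of `A`. -/
lemma exists_null_small {m n : ℕ} (A : Matrix (Fin m) (Fin n) ℝ) (S : Finset (Fin n))
    (hS : m < S.card) :
    ∃ z : Fin n → ℝ, z ≠ 0 ∧ A.mulVec z = 0 ∧ ∀ i ∉ S, z i = 0 := by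
  classical
  have h1 : ¬ LinearIndependent ℝ (fun i : S => (fun j => A j i : Fin m → ℝ)) := by
    intro h
    have h2 := h.fintype_card_le_finrank
    rw [Module.finrank_fin_fun, Fintype.card_coe] at h2
    omega
  rw [Fintype.not_linearIndependent_iff] at h1
  obtain ⟨g, hg, i₀, hi₀⟩ := h1
  refine ⟨fun i => if h : i ∈ S then g ⟨i, h⟩ else 0, ?_, ?_, ?_⟩
  · intro h0
    have := congrFun h0 i₀
    simp [i₀.2] at this
    exact hi₀ this
  · funext j
    have h2 := congrFun hg j
    simp only [Finset.sum_apply, Pi.smul_apply, smul_eq_mul, Pi.zero_apply] at h2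
    simp only [Matrix.mulVec, dotProduct, Pi.zero_apply]
    calc ∑ i, A j i * (if h : i ∈ S then g ⟨i, h⟩ else 0)
        = ∑ i ∈ S, A j i * (if h : i ∈ S then g ⟨i, h⟩ else 0) :=
          (Finset.sum_subset (Finset.subset_univ S)
            (fun i _ hi => by rw [dif_neg hi, mul_zero])).symm
      _ = ∑ i ∈ S.attach, A j ↑i * (if h : (i : Fin n) ∈ S then g ⟨i, h⟩ else 0) :=
          (Finset.sum_attach S _).symm
      _ = ∑ i : {x // x ∈ S}, g i * A j ↑i := by
          rw [← Finset.univ_eq_attach]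
          exact Finset.sum_congr rfl (fun i _ => by rw [dif_pos i.2, mul_comm])
      _ = 0 := h2
  · intro i hi
    exact dif_neg hi

/-- Conformal vector with small support inside the null space. -/
lemma conf_small {m n τ : ℕ} (A : Matrix (Fin m) (Fin n) ℝ) (hm : m + 1 ≤ τ) :
    ∀ t (d : Fin n → ℝ), (suppF d).card ≤ t → A.mulVec d = 0 → d ≠ 0 →
    ∃ z, z ≠ 0 ∧ A.mulVec z = 0 ∧ CConf d z ∧ (suppF z).card ≤ τ := by
  intro t
  induction t with
  | zero =>
    intro d hcard hnull hd0
    exfalso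
    apply hd0
    funext i
    by_contra hdi
    have : i ∈ suppF d := mem_suppF.mpr hdi
    have := Finset.card_pos.mpr ⟨i, this⟩
    omega
  | succ t ih =>
    intro d hcard hnull hd0
    by_cases hle : (suppF d).card ≤ τ
    · exact ⟨d, hd0, hnull, conf_self d, hle⟩
    · push_neg at hle
      obtain ⟨S, hSsub, hScard⟩ := Finset.exists_subset_card_eq (s := suppF d) (n := m + 1) (by omega)
      obtain ⟨w, hw0, hwnull, hwsupp⟩ := exists_null_small A S (by omega)
      -- a coordinate where w is nonzero
      have hdS : ∀ i, w i ≠ 0 → d i ≠ 0 := by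
        intro i hwi
        by_contra hdi
        have : i ∈ S := by by_contra hiS; exact hwi (hwsupp i hiS)
        exact (mem_suppF.mp (hSsub this)) hdi
      -- main construction, assuming a positive-product coordinate exists
      have key : ∀ w' : Fin n → ℝ, w' ≠ 0 → A.mulVec w' = 0 → (∀ i ∉ S, w' i = 0) →
          (∃ i, 0 < d i * w' i) →
          ∃ z, z ≠ 0 ∧ A.mulVec z = 0 ∧ CConf d z ∧ (suppF z).card ≤ τ := by
        intro w hw0 hwnull hwsupp hpos
        have hdS : ∀ i, w i ≠ 0 → d i ≠ 0 := by
          intro i hwi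
          by_contra hdi
          have : i ∈ S := by by_contra hiS; exact hwi (hwsupp i hiS)
          exact (mem_suppF.mp (hSsub this)) hdi
        set T : Finset (Fin n) := univ.filter (fun i => 0 < d i * w i) with hT
        have hTne : T.Nonempty := by
          obtain ⟨i, hi⟩ := hpos
          exact ⟨i, by simp [hT, hi]⟩
        obtain ⟨i0, hi0T, hmin⟩ := T.exists_min_image (fun i => d i / w i) hTne
        have hi0 : 0 < d i0 * w i0 := by simpa [hT] using hi0T
        have hw_i0 : w i0 ≠ 0 := fun h => by simp [h] at hi0
        have hd_i0 : d i0 ≠ 0 := fun h => by simp [h] at hi0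
        set α : ℝ := d i0 / w i0 with hα
        have hαpos : 0 < α := by
          rw [hα, div_pos_iff]
          rcases mul_pos_iff.mp hi0 with ⟨h1, h2⟩ | ⟨h1, h2⟩
          · exact Or.inl ⟨h1, h2⟩
          · exact Or.inr ⟨h1, h2⟩
        set d' : Fin n → ℝ := fun i => d i - α * w i with hd'
        have hd'null : A.mulVec d' = 0 := by
          have : d' = d - α • w := by funext i; simp [hd', smul_eq_mul]
          rw [this, Matrix.mulVec_sub, Matrix.mulVec_smul, hnull, hwnull, smul_zero, sub_zero]
        have hd'i0 : d' i0 = 0 := by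
          simp [hd', hα, div_mul_cancel₀ _ hw_i0]
        have hd'supp : suppF d' ⊆ (suppF d).erase i0 := by
          intro i hi
          rw [mem_suppF] at hi
          rw [Finset.mem_erase, mem_suppF]
          constructor
          · intro h; rw [h] at hi; exact hi hd'i0
          · by_contra hdi
            have hwi : w i = 0 := by
              by_contra hwi; exact (hdS i hwi) hdi
            apply hi; simp [hd', hwi, hdi]
        have hd'card : (suppF d').card ≤ t := by
          have h1 := Finset.card_le_card hd'supp
          have h2 : ((suppF d).erase i0).card = (suppF d).card - 1 := by
            apply Finset.card_erase_of_mem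
            exact mem_suppF.mpr hd_i0
          omega
        have hd'0 : d' ≠ 0 := by
          intro h0
          have : ∀ i, d i = α * w i := by
            intro i
            have := congrFun h0 i
            simp [hd'] at this
            linarith
          have hsub : suppF d ⊆ S := by
            intro i hi
            rw [mem_suppF] at hi
            by_contra hiS
            rw [this i, hwsupp i hiS, mul_zero] at hi
            exact hi rfl
          have := Finset.card_le_card hsub
          omega
        have hconf : CConf d d' := by
          intro i
          by_cases hwi : w i = 0
          · constructor
            · simp [hd', hwi, mul_self_nonneg]
            · intro h; simp [hd', hwi, h]
          · have hdi : d i ≠ 0 := hdS i hwi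
            refine ⟨?_, fun h => absurd h hdi⟩
            rcases lt_trichotomy (d i * w i) 0 with hneg | hz | hposi
            · simp only [hd']
              nlinarith [mul_self_nonneg (d i), mul_pos hαpos (neg_pos.mpr hneg)]
            · exact absurd hz (mul_ne_zero hdi hwi)
            · have hiT : i ∈ T := by simp [hT, hposi]
              have hle' : α ≤ d i / w i := hmin i hiT
              have hr : (d i / w i) * w i = d i := div_mul_cancel₀ _ hwi
              have h1 : α * (d i * w i) ≤ (d i / w i) * (d i * w i) :=
                mul_le_mul_of_nonneg_right hle' (le_of_lt hposi)
              have h2 : (d i / w i) * (d i * w i) = d i * d i := by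
                field_simp
              simp only [hd']
              nlinarith [h1, h2]
        obtain ⟨z, hz0, hznull, hzconf, hzcard⟩ := ih d' hd'card hd'null hd'0
        exact ⟨z, hz0, hznull, conf_trans hconf hzconf, hzcard⟩
      -- pick the right sign of w
      obtain ⟨i1, hwi1⟩ : ∃ i, w i ≠ 0 := by
        by_contra hc; push_neg at hc; exact hw0 (funext fun i => hc i)
      have hdi1 : d i1 ≠ 0 := hdS i1 hwi1
      rcases lt_trichotomy (d i1 * w i1) 0 with hneg | hz | hposi
      · refine key (-w) (by simpa using hw0) (by rw [Matrix.mulVec_neg, hwnull, neg_zero])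
          (fun i hi => by simp [hwsupp i hi]) ⟨i1, by simp; nlinarith⟩
      · exact absurd hz (mul_ne_zero hdi1 hwi1)
      · exact key w hw0 hwnull hwsupp ⟨i1, hposi⟩

lemma btw_sub' {n : ℕ} {d e : Fin n → ℝ} (h : CBtw d e) : CBtw d (fun i => d i - e i) := by
  intro i
  have hh : (fun i => d i - e i) i = d i - e i := rfl
  rw [hh]
  rcases h i with ⟨a1, a2⟩ | ⟨a1, a2⟩
  · exact Or.inl ⟨by linarith, by linarith⟩
  · exact Or.inr ⟨by linarith, by linarith⟩

/-- Conformal decomposition into few pieces of small support. -/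
lemma decomp {m n τ : ℕ} (A : Matrix (Fin m) (Fin n) ℝ) (hm : m + 1 ≤ τ) :
    ∀ t (d : Fin n → ℝ), (suppF d).card ≤ t → A.mulVec d = 0 →
    ∃ (s : ℕ) (e : Fin s → Fin n → ℝ),
      (∀ i, d i = ∑ j, e j i) ∧
      (∀ j, A.mulVec (e j) = 0 ∧ CBtw d (e j) ∧ (suppF (e j)).card ≤ τ) ∧
      s ≤ max 1 ((suppF d).card + 1 - τ) := by
  intro t
  induction t with
  | zero =>
    intro d hcard hnull
    refine ⟨1, fun _ => d, fun i => by simp, fun j => ⟨hnull, btw_self d, ?_⟩, le_max_left _ _⟩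
    show (suppF d).card ≤ τ
    omega
  | succ t ih =>
    intro d hcard hnull
    by_cases hle : (suppF d).card ≤ τ
    · exact ⟨1, fun _ => d, fun i => by simp, fun j => ⟨hnull, btw_self d, hle⟩, le_max_left _ _⟩
    · push_neg at hle
      have hd0 : d ≠ 0 := by
        intro h0
        rw [h0] at hle
        simp [suppF] at hle
      obtain ⟨z, hz0, hznull, hzconf, hzcard⟩ := conf_small A hm (t + 1) d hcard hnull hd0
      have hzd : ∀ i, z i ≠ 0 → d i ≠ 0 := fun i hzi hdi => hzi ((hzconf i).2 hdi)
      have hSzne : (suppF z).Nonempty := by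
        obtain ⟨i, hi⟩ : ∃ i, z i ≠ 0 := by
          by_contra hc; push_neg at hc; exact hz0 (funext fun i => hc i)
        exact ⟨i, mem_suppF.mpr hi⟩
      obtain ⟨i0, hi0, hmin⟩ := (suppF z).exists_min_image (fun i => d i / z i) hSzne
      have hz_i0 : z i0 ≠ 0 := mem_suppF.mp hi0
      have hd_i0 : d i0 ≠ 0 := hzd i0 hz_i0
      set β : ℝ := d i0 / z i0 with hβ
      have hratio : ∀ i, z i ≠ 0 → 0 < d i / z i := by
        intro i hzi
        have h1 : 0 ≤ d i * z i := (hzconf i).1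
        have h2 : d i * z i ≠ 0 := mul_ne_zero (hzd i hzi) hzi
        have h3 : 0 < d i * z i := lt_of_le_of_ne h1 (Ne.symm h2)
        rw [div_pos_iff]
        rcases mul_pos_iff.mp h3 with ⟨a, b⟩ | ⟨a, b⟩
        · exact Or.inl ⟨a, b⟩
        · exact Or.inr ⟨a, b⟩
      have hβpos : 0 < β := hratio i0 hz_i0
      set e0 : Fin n → ℝ := fun i => β * z i with he0
      have he0btw : CBtw d e0 := by
        intro i
        have hee : e0 i = β * z i := rfl
        rw [hee]
        by_cases hzi : z i = 0
        · rw [hzi, mul_zero]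
          rcases le_total 0 (d i) with h | h
          · exact Or.inl ⟨le_rfl, h⟩
          · exact Or.inr ⟨h, le_rfl⟩
        · have hri : 0 < d i / z i := hratio i hzi
          have hminle : β ≤ d i / z i := hmin i (mem_suppF.mpr hzi)
          have hr : (d i / z i) * z i = d i := div_mul_cancel₀ _ hzi
          rcases lt_trichotomy (z i) 0 with hzn | hzz | hzp
          · refine Or.inr ⟨?_, ?_⟩
            · nlinarith
            · nlinarith
          · exact absurd hzz hzi
          · refine Or.inl ⟨?_, ?_⟩
            · positivity
            · nlinarith
      set d' : Fin n → ℝ := fun i => d i - e0 i with hd'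
      have hd'btw : CBtw d d' := btw_sub' he0btw
      have he0null : A.mulVec e0 = 0 := by
        have : e0 = β • z := by funext i; simp [he0, smul_eq_mul]
        rw [this, Matrix.mulVec_smul, hznull, smul_zero]
      have hd'null : A.mulVec d' = 0 := by
        have : d' = d - β • z := by funext i; simp [hd', he0, smul_eq_mul]
        rw [this, Matrix.mulVec_sub, Matrix.mulVec_smul, hnull, hznull, smul_zero, sub_zero]
      have hd'i0 : d' i0 = 0 := by
        simp [hd', he0, hβ, div_mul_cancel₀ _ hz_i0]
      have hd'supp : suppF d' ⊆ (suppF d).erase i0 := by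
        intro i hi
        rw [mem_suppF] at hi
        rw [Finset.mem_erase, mem_suppF]
        constructor
        · intro h; rw [h] at hi; exact hi hd'i0
        · by_contra hdi
          have hzi : z i = 0 := by by_contra hzi; exact (hzd i hzi) hdi
          apply hi; simp [hd', he0, hzi, hdi]
      have hd'card : (suppF d').card ≤ t := by
        have h1 := Finset.card_le_card hd'supp
        have h2 : ((suppF d).erase i0).card = (suppF d).card - 1 :=
          Finset.card_erase_of_mem (mem_suppF.mpr hd_i0)
        omega
      obtain ⟨s', e', hsum', hprop', hcount'⟩ := ih d' hd'card hd'null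
      have he0card : (suppF e0).card ≤ τ := by
        apply le_trans (Finset.card_le_card _) hzcard
        intro i hi
        rw [mem_suppF] at hi ⊢
        intro h; apply hi; simp [he0, h]
      refine ⟨s' + 1, Fin.cons e0 e', ?_, ?_, ?_⟩
      · intro i
        rw [Fin.sum_univ_succ]
        simp only [Fin.cons_zero, Fin.cons_succ]
        have := hsum' i
        simp only [hd'] at this
        linarith
      · intro j
        refine Fin.cases ?_ ?_ j
        · simp only [Fin.cons_zero]
          exact ⟨he0null, he0btw, he0card⟩
        · intro j'
          simp only [Fin.cons_succ]
          exact ⟨(hprop' j').1, btw_trans hd'btw (hprop' j').2.1, (hprop' j').2.2⟩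
      · have h2 : (suppF d').card ≤ (suppF d).card - 1 := by
          have h1 := Finset.card_le_card hd'supp
          have h3 : ((suppF d).erase i0).card = (suppF d).card - 1 :=
            Finset.card_erase_of_mem (mem_suppF.mpr hd_i0)
          omega
        omega

lemma sum_sq_le {s : ℕ} (t : Fin s → ℝ) (T : ℝ)
    (hb : ∀ j, (0 ≤ t j ∧ t j ≤ T) ∨ (T ≤ t j ∧ t j ≤ 0))
    (hs : ∑ j, t j = T) : ∑ j, (t j) ^ 2 ≤ T ^ 2 := by
  have h1 : ∀ j, (t j) ^ 2 ≤ T * t j := fun j => by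
    rcases hb j with ⟨a, b⟩ | ⟨a, b⟩ <;> nlinarith
  calc ∑ j, (t j) ^ 2 ≤ ∑ j, T * t j := Finset.sum_le_sum (fun j _ => h1 j)
    _ = T * T := by rw [← Finset.mul_sum, hs]
    _ = T ^ 2 := (sq T).symm

lemma sum_convex_le {s : ℕ} (φ : ℝ → ℝ) (hφ : ConvexOn ℝ Set.univ φ) (x T : ℝ)
    (t : Fin s → ℝ) (hb : ∀ j, (0 ≤ t j ∧ t j ≤ T) ∨ (T ≤ t j ∧ t j ≤ 0))
    (hs : ∑ j, t j = T) :
    ∑ j, (φ (x + t j) - φ x) ≤ φ (x + T) - φ x := by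
  rcases eq_or_ne T 0 with hT | hT
  · subst hT
    have hz : ∀ j, t j = 0 := fun j => by
      rcases hb j with ⟨a, b⟩ | ⟨a, b⟩ <;> linarith
    simp [hz]
  · have key : ∀ j, φ (x + t j) - φ x ≤ (t j / T) * (φ (x + T) - φ x) := by
      intro j
      have hr0 : 0 ≤ t j / T := by
        rw [div_nonneg_iff]
        rcases hb j with ⟨a, b⟩ | ⟨a, b⟩
        · exact Or.inl ⟨a, by linarith⟩
        · exact Or.inr ⟨b, by linarith⟩
      have hr1 : t j / T ≤ 1 := by
        rw [div_le_one_iff]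
        rcases hb j with ⟨a, b⟩ | ⟨a, b⟩
        · exact Or.inl ⟨lt_of_le_of_ne (by linarith) (Ne.symm hT), b⟩
        · exact Or.inr (Or.inr ⟨lt_of_le_of_ne (by linarith) hT, a⟩)
      have hcvx := hφ.2 (Set.mem_univ x) (Set.mem_univ (x + T))
        (by linarith : (0:ℝ) ≤ 1 - t j / T) hr0 (by ring)
      have harg : (1 - t j / T) • x + (t j / T) • (x + T) = x + t j := by
        have : (t j / T) * T = t j := div_mul_cancel₀ _ hT
        simp only [smul_eq_mul]
        nlinarith [this]
      rw [harg] at hcvx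
      simp only [smul_eq_mul] at hcvx
      nlinarith [hcvx]
    calc ∑ j, (φ (x + t j) - φ x) ≤ ∑ j, (t j / T) * (φ (x + T) - φ x) :=
          Finset.sum_le_sum (fun j _ => key j)
      _ = (∑ j, t j / T) * (φ (x + T) - φ x) := by rw [Finset.sum_mul]
      _ = φ (x + T) - φ x := by
          rw [← Finset.sum_div, hs, div_self hT, one_mul]



/-- linear convergence of block-coordinate descent with the GS-q rule,
block size `τ ≥ m + 1`, for `F = f + h` with `h` convex and coordinate-wise separable,
linear constraints `Ax = c` (`A` of full row rank), `∇f` τ-coordinate Lipschitz with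
constant `L₂`, and `F` satisfying the proximal-PL inequality in the 2-norm with
constant `μ₂`:  `F(x^k) − F* ≤ (1 − μ₂/(L₂(n − τ + 1)))^k (F(x^0) − F*)`. -/
theorem stmt_13 {m n τ : ℕ} (hτm : m + 1 ≤ τ) (hτn : τ ≤ n)
    (A : Matrix (Fin m) (Fin n) ℝ) (hA : A.rank = m) (c : Fin m → ℝ)
    (f : (Fin n → ℝ) → ℝ) (hf : Differentiable ℝ f)
    (h : Fin n → ℝ → ℝ) (hconv : ∀ i, ConvexOn ℝ Set.univ (h i))
    (F : (Fin n → ℝ) → ℝ) (hF : F = fun x => f x + ∑ i, h i (x i))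
    (L₂ μ₂ : ℝ) (hL₂ : 0 < L₂) (hμ₂ : 0 < μ₂)
    -- ∇f is τ-coordinate Lipschitz with constant L₂ on the feasible set
    (hLip : ∀ x : Fin n → ℝ, A.mulVec x = c → ∀ d : Fin n → ℝ,
      {i | d i ≠ 0}.ncard ≤ τ → A.mulVec d = 0 →
      f (x + d) ≤ f x + fderiv ℝ f x d + L₂ / 2 * ∑ i, (d i) ^ 2)
    (Fstar : ℝ) (hFstar : IsGLB (F '' {x | A.mulVec x = c}) Fstar)
    -- proximal-PL inequality in the 2-norm
    (hPL : ∀ x : Fin n → ℝ, A.mulVec x = c →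
      F x - Fstar ≤ -(L₂ / μ₂) * sInf {v | ∃ d : Fin n → ℝ, A.mulVec d = 0 ∧
        v = fderiv ℝ f x d + L₂ / 2 * ∑ i, (d i) ^ 2 +
          ((∑ i, h i (x i + d i)) - ∑ i, h i (x i))})
    -- the iterates: x^{k+1} = x^k + U_{b^k}(d*_{b^k}) with (b^k, d^k) chosen by GS-q
    (x : ℕ → Fin n → ℝ) (hx0 : A.mulVec (x 0) = c)
    (d : ℕ → Fin n → ℝ) (hiter : ∀ k, x (k + 1) = x k + d k)
    (hGSq : ∀ k, ∃ b : Finset (Fin n), b.card = τ ∧ (∀ i ∉ b, d k i = 0) ∧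
      A.mulVec (d k) = 0 ∧
      ∀ (b' : Finset (Fin n)) (e : Fin n → ℝ), b'.card = τ → (∀ i ∉ b', e i = 0) →
        A.mulVec e = 0 →
        fderiv ℝ f (x k) (d k) + L₂ / 2 * ∑ i, (d k i) ^ 2 +
            ∑ i ∈ b, (h i (x k i + d k i) - h i (x k i)) ≤
          fderiv ℝ f (x k) e + L₂ / 2 * ∑ i, (e i) ^ 2 +
            ∑ i ∈ b', (h i (x k i + e i) - h i (x k i))) :
    ∀ k, F (x k) - Fstar ≤
      (1 - μ₂ / (L₂ * ((n : ℝ) - τ + 1))) ^ k * (F (x 0) - Fstar) := by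
  classical
  set N : ℝ := (n : ℝ) - τ + 1 with hN
  clear_value N
  have hNpos : 0 < N := by
    have : (τ : ℝ) ≤ n := Nat.cast_le.mpr hτn
    rw [hN]; linarith
  -- feasibility along the iterates
  have hfeas : ∀ k, A.mulVec (x k) = c := by
    intro k
    induction k with
    | zero => exact hx0
    | succ k ih =>
      obtain ⟨b, hbcard, hbsupp, hdnull, _⟩ := hGSq k
      rw [hiter k, Matrix.mulVec_add, hdnull, ih, add_zero]
  have hlb : ∀ k, 0 ≤ F (x k) - Fstar := by
    intro k
    have : Fstar ≤ F (x k) := hFstar.1 ⟨x k, hfeas k, rfl⟩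
    linarith
  -- per-step contraction
  have hstep : ∀ k, F (x (k + 1)) - Fstar ≤ (1 - μ₂ / (L₂ * N)) * (F (x k) - Fstar) := by
    intro k
    obtain ⟨b, hbcard, hbsupp, hdnull, hminb⟩ := hGSq k
    have hhsum : ∀ (v : Fin n → ℝ) (b' : Finset (Fin n)), (∀ i ∉ b', v i = 0) →
        ∑ i ∈ b', (h i (x k i + v i) - h i (x k i)) =
          ∑ i, (h i (x k i + v i) - h i (x k i)) :=
      fun v b' hv => Finset.sum_subset (Finset.subset_univ _)
        (fun i _ hi => by rw [hv i hi, add_zero, sub_self])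
    set P : ℝ := fderiv ℝ f (x k) (d k) + L₂ / 2 * ∑ i, (d k i) ^ 2 +
      ∑ i, (h i (x k i + d k i) - h i (x k i)) with hP
    clear_value P
    -- GS-q optimality against any small-support null direction
    have hPblock : ∀ e : Fin n → ℝ, A.mulVec e = 0 → (suppF e).card ≤ τ →
        P ≤ fderiv ℝ f (x k) e + L₂ / 2 * ∑ i, (e i) ^ 2 +
          ∑ i, (h i (x k i + e i) - h i (x k i)) := by
      intro e henull hecard
      obtain ⟨b', hsub, -, hb'card⟩ := Finset.exists_subsuperset_card_eq
        (Finset.subset_univ (suppF e)) hecard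
        (by rw [Finset.card_univ, Fintype.card_fin]; exact hτn)
      have he0 : ∀ i ∉ b', e i = 0 := fun i hi => by
        by_contra h0; exact hi (hsub (mem_suppF.mpr h0))
      have hm1 := hminb b' e hb'card he0 henull
      rw [hhsum (d k) b hbsupp, hhsum e b' he0, ← hP] at hm1
      exact hm1
    have hP0 : P ≤ 0 := by
      have h0 := hPblock 0 (Matrix.mulVec_zero A) (by simp [suppF])
      simpa using h0
    -- key inequality versus any null direction
    have hkey : ∀ dd : Fin n → ℝ, A.mulVec dd = 0 →
        N * P ≤ fderiv ℝ f (x k) dd + L₂ / 2 * ∑ i, (dd i) ^ 2 +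
          ((∑ i, h i (x k i + dd i)) - ∑ i, h i (x k i)) := by
      intro dd hddnull
      obtain ⟨s, e, hsum, hprop, hcount⟩ := decomp A hτm ((suppF dd).card) dd le_rfl hddnull
      have hscast : (s : ℝ) ≤ N := by
        have h2 : (suppF dd).card ≤ n := by
          have := Finset.card_le_card (Finset.subset_univ (suppF dd))
          rwa [Finset.card_univ, Fintype.card_fin] at this
        have h4 : s + τ ≤ n + 1 := by omega
        have h5 := (Nat.cast_le (α := ℝ)).mpr h4
        push_cast at h5
        have hτr : (τ : ℝ) ≤ n := Nat.cast_le.mpr hτn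
        rw [hN]; linarith
      have hddsum : dd = ∑ j, e j := by
        funext i
        rw [hsum i, Finset.sum_apply]
      have hgd : fderiv ℝ f (x k) dd = ∑ j, fderiv ℝ f (x k) (e j) := by
        conv_lhs => rw [hddsum]
        exact map_sum (fderiv ℝ f (x k)) e Finset.univ
      have hsq : ∑ j, (L₂ / 2 * ∑ i, (e j i) ^ 2) ≤ L₂ / 2 * ∑ i, (dd i) ^ 2 := by
        rw [← Finset.mul_sum]
        apply mul_le_mul_of_nonneg_left _ (by positivity)
        rw [Finset.sum_comm]
        apply Finset.sum_le_sum
        intro i _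
        exact sum_sq_le (fun j => e j i) (dd i) (fun j => (hprop j).2.1 i) (hsum i).symm
      have hh : ∑ j, (∑ i, (h i (x k i + e j i) - h i (x k i))) ≤
          (∑ i, h i (x k i + dd i)) - ∑ i, h i (x k i) := by
        rw [← Finset.sum_sub_distrib, Finset.sum_comm]
        apply Finset.sum_le_sum
        intro i _
        exact sum_convex_le (h i) (hconv i) (x k i) (dd i) (fun j => e j i)
          (fun j => (hprop j).2.1 i) (hsum i).symm
      have hpiece : ∀ j, P ≤ fderiv ℝ f (x k) (e j) + L₂ / 2 * ∑ i, (e j i) ^ 2 +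
          ∑ i, (h i (x k i + e j i) - h i (x k i)) :=
        fun j => hPblock (e j) (hprop j).1 (hprop j).2.2
      have hsumP : (s : ℝ) * P ≤ ∑ j, (fderiv ℝ f (x k) (e j) + L₂ / 2 * ∑ i, (e j i) ^ 2 +
          ∑ i, (h i (x k i + e j i) - h i (x k i))) := by
        calc (s : ℝ) * P = ∑ _j : Fin s, P := by
              rw [Finset.sum_const, Finset.card_univ, Fintype.card_fin, nsmul_eq_mul]
          _ ≤ _ := Finset.sum_le_sum (fun j _ => hpiece j)
      have hNP : N * P ≤ (s : ℝ) * P := mul_le_mul_of_nonpos_right hscast hP0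
      have hsplit : ∑ j, (fderiv ℝ f (x k) (e j) + L₂ / 2 * ∑ i, (e j i) ^ 2 +
          ∑ i, (h i (x k i + e j i) - h i (x k i))) =
          (∑ j, fderiv ℝ f (x k) (e j)) + (∑ j, L₂ / 2 * ∑ i, (e j i) ^ 2) +
          ∑ j, (∑ i, (h i (x k i + e j i) - h i (x k i))) := by
        rw [Finset.sum_add_distrib, Finset.sum_add_distrib]
      rw [hsplit] at hsumP
      linarith [hgd, hsq, hh, hNP, hsumP]
    -- PL inequality gives a bound on P
    have hSne : ({v | ∃ dd : Fin n → ℝ, A.mulVec dd = 0 ∧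
        v = fderiv ℝ f (x k) dd + L₂ / 2 * ∑ i, (dd i) ^ 2 +
          ((∑ i, h i (x k i + dd i)) - ∑ i, h i (x k i))} : Set ℝ).Nonempty := by
      refine ⟨0, 0, Matrix.mulVec_zero A, ?_⟩
      simp
    have hSInf : N * P ≤ sInf {v | ∃ dd : Fin n → ℝ, A.mulVec dd = 0 ∧
        v = fderiv ℝ f (x k) dd + L₂ / 2 * ∑ i, (dd i) ^ 2 +
          ((∑ i, h i (x k i + dd i)) - ∑ i, h i (x k i))} := by
      apply le_csInf hSne
      rintro v ⟨dd, hdd1, rfl⟩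
      exact hkey dd hdd1
    have hPLk := hPL (x k) (hfeas k)
    have e1 : μ₂ * (F (x k) - Fstar) ≤ -(L₂ * (N * P)) := by
      have h1 : μ₂ * (F (x k) - Fstar) ≤ μ₂ * (-(L₂ / μ₂) *
          sInf {v | ∃ dd : Fin n → ℝ, A.mulVec dd = 0 ∧
            v = fderiv ℝ f (x k) dd + L₂ / 2 * ∑ i, (dd i) ^ 2 +
              ((∑ i, h i (x k i + dd i)) - ∑ i, h i (x k i))}) :=
        mul_le_mul_of_nonneg_left hPLk (le_of_lt hμ₂)
      have h2 : ∀ S : ℝ, μ₂ * (-(L₂ / μ₂) * S) = -(L₂ * S) := by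
        intro S
        field_simp
      rw [h2] at h1
      have h3 : -(L₂ * sInf {v | ∃ dd : Fin n → ℝ, A.mulVec dd = 0 ∧
            v = fderiv ℝ f (x k) dd + L₂ / 2 * ∑ i, (dd i) ^ 2 +
              ((∑ i, h i (x k i + dd i)) - ∑ i, h i (x k i))}) ≤ -(L₂ * (N * P)) := by
        apply neg_le_neg
        exact mul_le_mul_of_nonneg_left hSInf (le_of_lt hL₂)
      linarith
    -- descent step
    have hdesc : F (x (k + 1)) ≤ F (x k) + P := by
      have hsupp : {i | d k i ≠ 0}.ncard ≤ τ := by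
        have hsub : {i | d k i ≠ 0} ⊆ ↑b := by
          intro i hi
          by_contra hib
          exact hi (hbsupp i hib)
        calc {i | d k i ≠ 0}.ncard ≤ (↑b : Set (Fin n)).ncard :=
              Set.ncard_le_ncard hsub (Set.toFinite _)
          _ = b.card := Set.ncard_coe_finset b
          _ = τ := hbcard
      have hlip := hLip (x k) (hfeas k) (d k) hsupp hdnull
      rw [hiter k, hF]
      simp only [Pi.add_apply]
      have hPs : P = fderiv ℝ f (x k) (d k) + L₂ / 2 * ∑ i, (d k i) ^ 2 +
          ((∑ i, h i (x k i + d k i)) - ∑ i, h i (x k i)) := by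
        rw [hP, Finset.sum_sub_distrib]
      linarith
    -- combine
    have e2 : μ₂ * (F (x k) - Fstar) / (L₂ * N) ≤ -P := by
      rw [div_le_iff₀ (by positivity)]
      nlinarith [e1]
    have e3 : (1 - μ₂ / (L₂ * N)) * (F (x k) - Fstar) =
        (F (x k) - Fstar) - μ₂ * (F (x k) - Fstar) / (L₂ * N) := by
      field_simp
    rw [e3]
    linarith [hdesc, e2]
  -- conclude by induction
  intro k
  rcases eq_or_lt_of_le (hlb 0) with h0 | h0
  · have hz : ∀ j, F (x j) - Fstar = 0 := by
      intro j
      induction j with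
      | zero => exact h0.symm
      | succ j ihj =>
        have hs := hstep j
        rw [ihj, mul_zero] at hs
        exact le_antisymm hs (hlb (j + 1))
    rw [hz k, ← h0, mul_zero]
  · have hr : 0 ≤ 1 - μ₂ / (L₂ * N) := by
      have h1 := hstep 0
      have h2 := hlb 1
      nlinarith
    induction k with
    | zero => simp
    | succ k ihk =>
      calc F (x (k + 1)) - Fstar ≤ (1 - μ₂ / (L₂ * N)) * (F (x k) - Fstar) := hstep k
        _ ≤ (1 - μ₂ / (L₂ * N)) * ((1 - μ₂ / (L₂ * N)) ^ k * (F (x 0) - Fstar)) :=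
            mul_le_mul_of_nonneg_left ihk hr
        _ = (1 - μ₂ / (L₂ * N)) ^ (k + 1) * (F (x 0) - Fstar) := by ring
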